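/- For the step set S = {±1, ±2} with weights ω_{±2} = t, ω_{±1} = 1 (steps ±2 have length 2), the excursion generating function E satisfies t^8 E^4 - t^4(1+2t^2) E^3 + t^2(3+2t^2) E^2 - (1+2t^2) E + 1 = 0. -/

import Mathlib

/-- A walk (list of steps) is an excursion over step set `S` if all its steps lie
in `S`, all its partial sums are non-negative, and its total sum is `0`. -/
def IsExcursion (S : Set ℤ) (l : List ℤ) : Prop :=
  (∀ x ∈ l, x ∈ S) ∧ (∀ m : ℕ, 0 ≤ ((l.take m).sum)) ∧ l.sum = 0

/-- The generating function of excursions with steps in `{±1, ±2}` where each step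
`±2` has length `2` and each step `±1` has length `1`: the coefficient of `tⁿ` is
the number of such excursions of total length `n`. -/
noncomputable def basketGF : PowerSeries ℚ :=
  PowerSeries.mk fun n =>
    (Nat.card {l : List ℤ // IsExcursion {1, -1, 2, -2} l ∧ (l.map Int.natAbs).sum = n} : ℚ)

namespace Basket

open PowerSeries Finset

def SS : Set ℤ := {1, -1, 2, -2}

def wt (l : List ℤ) : ℕ := (l.map Int.natAbs).sum

lemma wt_append (l1 l2 : List ℤ) : wt (l1 ++ l2) = wt l1 + wt l2 := by
  simp [wt]

/-- Walks from height `a` to height `b` staying nonnegative. -/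
def Wk (a b : ℤ) (l : List ℤ) : Prop :=
  (∀ x ∈ l, x ∈ SS) ∧ (∀ m : ℕ, 0 ≤ a + (l.take m).sum) ∧ a + l.sum = b

/-- First passage to `0` from height `a`: heights strictly positive before the end. -/
def FP (a : ℤ) (l : List ℤ) : Prop :=
  Wk a 0 l ∧ ∀ m < l.length, 0 < a + (l.take m).sum

noncomputable def gf (C : List ℤ → Prop) : PowerSeries ℚ :=
  PowerSeries.mk fun n => (Nat.card {l : List ℤ // C l ∧ wt l = n} : ℚ)

lemma length_le_wt {l : List ℤ} (h : ∀ x ∈ l, x ∈ SS) : l.length ≤ wt l := by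
  induction l with
  | nil => simp [wt]
  | cons x xs ih =>
    have hx : x ∈ SS := h x (by simp)
    have h1 : 1 ≤ x.natAbs := by
      rcases hx with h | h | h | h <;> simp_all
    have h2 := ih (fun y hy => h y (by simp [hy]))
    simp only [wt, List.map_cons, List.sum_cons, List.length_cons] at h2 ⊢
    omega

lemma finite_steps_len (n : ℕ) :
    {l : List ℤ | (∀ x ∈ l, x ∈ SS) ∧ l.length ≤ n}.Finite := by
  induction n with
  | zero =>
    apply Set.Finite.subset (Set.finite_singleton ([] : List ℤ))
    rintro l ⟨-, hl⟩
    simpa using hl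
  | succ n ih =>
    have hS : SS.Finite := by
      unfold SS
      exact (Set.finite_singleton _).insert _ |>.insert _ |>.insert _
    apply Set.Finite.subset (Set.Finite.insert ([] : List ℤ) (Set.Finite.image2 List.cons hS ih))
    rintro l ⟨h1, h2⟩
    cases l with
    | nil => simp
    | cons x xs =>
      right
      refine Set.mem_image2_of_mem (h1 x (by simp)) ⟨fun y hy => h1 y (by simp [hy]), ?_⟩
      simpa using h2

lemma finite_class {C : List ℤ → Prop} (hC : ∀ l, C l → ∀ x ∈ l, x ∈ SS) (n : ℕ) :
    Finite {l : List ℤ // C l ∧ wt l = n} := by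
  have : {l : List ℤ | C l ∧ wt l = n} ⊆ {l : List ℤ | (∀ x ∈ l, x ∈ SS) ∧ l.length ≤ n} := by
    rintro l ⟨h1, h2⟩
    exact ⟨hC l h1, h2 ▸ length_le_wt (hC l h1)⟩
  exact ((finite_steps_len n).subset this).to_subtype

section GFLemmas
open PowerSeries Finset

lemma nat_card_sigma {ι : Type*} [Fintype ι] (f : ι → Type*) [∀ i, Finite (f i)] :
    Nat.card (Σ i, f i) = ∑ i, Nat.card (f i) := by
  classical
  letI : ∀ i, Fintype (f i) := fun i => Fintype.ofFinite _
  simp [Nat.card_eq_fintype_card, Fintype.card_sigma]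

lemma gf_congr {A B : List ℤ → Prop} (h : ∀ l, A l ↔ B l) : gf A = gf B := by
  have : A = B := funext fun l => propext (h l)
  rw [this]

lemma gf_one : gf (fun l => l = []) = 1 := by
  ext n
  rw [gf, coeff_mk, coeff_one]
  rcases eq_or_ne n 0 with rfl | hn
  · haveI : Unique {l : List ℤ // l = [] ∧ wt l = 0} :=
      ⟨⟨⟨[], rfl, rfl⟩⟩, fun x => Subtype.ext (by simpa using x.2.1)⟩
    simp [Nat.card_unique]
  · haveI : IsEmpty {l : List ℤ // l = [] ∧ wt l = n} := by
      constructor; rintro ⟨l, rfl, hw⟩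
      exact hn (by simpa [wt] using hw.symm)
    simp [Nat.card_of_isEmpty, hn]

lemma gf_single (s : ℤ) : gf (fun l => l = [s]) = X ^ s.natAbs := by
  ext n
  rw [gf, coeff_mk, coeff_X_pow]
  rcases eq_or_ne n s.natAbs with rfl | hn
  · haveI : Unique {l : List ℤ // l = [s] ∧ wt l = s.natAbs} :=
      ⟨⟨⟨[s], rfl, by simp [wt]⟩⟩, fun x => Subtype.ext (by simpa using x.2.1)⟩
    simp [Nat.card_unique]
  · haveI : IsEmpty {l : List ℤ // l = [s] ∧ wt l = n} := by
      constructor; rintro ⟨l, rfl, hw⟩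
      exact hn (by simpa [wt] using hw.symm)
    simp [Nat.card_of_isEmpty, hn]

lemma gf_add {A B C : List ℤ → Prop}
    (hA : ∀ l, A l → ∀ x ∈ l, x ∈ SS) (hB : ∀ l, B l → ∀ x ∈ l, x ∈ SS)
    (h : ∀ l, C l ↔ A l ∨ B l) (hd : ∀ l, A l → B l → False) :
    gf C = gf A + gf B := by
  ext n
  rw [gf, map_add, coeff_mk, gf, gf, coeff_mk, coeff_mk]
  haveI := finite_class hA n
  haveI := finite_class hB n
  have key : Nat.card {l : List ℤ // C l ∧ wt l = n} =
      Nat.card {l : List ℤ // A l ∧ wt l = n} + Nat.card {l : List ℤ // B l ∧ wt l = n} := by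
    rw [← Nat.card_sum]
    refine (Nat.card_eq_of_bijective
      (fun x => Sum.elim
        (fun (a : {l : List ℤ // A l ∧ wt l = n}) =>
          (⟨a.1, (h a.1).2 (Or.inl a.2.1), a.2.2⟩ : {l : List ℤ // C l ∧ wt l = n}))
        (fun (b : {l : List ℤ // B l ∧ wt l = n}) =>
          ⟨b.1, (h b.1).2 (Or.inr b.2.1), b.2.2⟩) x) ⟨?_, ?_⟩).symm
    · rintro (a | a) (b | b) hab <;> simp only [Sum.elim_inl, Sum.elim_inr, Subtype.mk.injEq] at hab
      · exact congrArg Sum.inl (Subtype.ext hab)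
      · exact absurd (hab ▸ a.2.1) (fun hAb => hd _ hAb b.2.1)
      · exact absurd (hab ▸ a.2.1) (fun hBb => hd _ b.2.1 hBb)
      · exact congrArg Sum.inr (Subtype.ext hab)
    · rintro ⟨l, hC, hw⟩
      rcases (h l).1 hC with hl | hl
      · exact ⟨Sum.inl ⟨l, hl, hw⟩, rfl⟩
      · exact ⟨Sum.inr ⟨l, hl, hw⟩, rfl⟩
  rw [key]; push_cast; ring

lemma gf_mul {A B C : List ℤ → Prop}
    (hA : ∀ l, A l → ∀ x ∈ l, x ∈ SS) (hB : ∀ l, B l → ∀ x ∈ l, x ∈ SS)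
    (h : ∀ l, C l ↔ ∃ l1 l2, A l1 ∧ B l2 ∧ l = l1 ++ l2)
    (huniq : ∀ l1 l2 l1' l2', A l1 → B l2 → A l1' → B l2' →
      l1 ++ l2 = l1' ++ l2' → l1 = l1') :
    gf C = gf A * gf B := by
  classical
  ext n
  rw [gf, coeff_mk, coeff_mul]
  haveI : ∀ k, Finite {l : List ℤ // A l ∧ wt l = k} := finite_class hA
  haveI : ∀ k, Finite {l : List ℤ // B l ∧ wt l = k} := finite_class hB
  set T : ↥(antidiagonal n) → Type :=
    fun p => {l : List ℤ // A l ∧ wt l = p.1.1} × {l : List ℤ // B l ∧ wt l = p.1.2} with hT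
  have key : Nat.card {l : List ℤ // C l ∧ wt l = n} = Nat.card (Σ p, T p) := by
    refine (Nat.card_eq_of_bijective
      (fun e => (⟨e.2.1.1 ++ e.2.2.1,
        (h _).2 ⟨e.2.1.1, e.2.2.1, e.2.1.2.1, e.2.2.2.1, rfl⟩, by
          have hp := Finset.HasAntidiagonal.mem_antidiagonal.1 e.1.2
          rw [wt_append, e.2.1.2.2, e.2.2.2.2, hp]⟩ : {l : List ℤ // C l ∧ wt l = n}))
      ⟨?_, ?_⟩).symm
    · rintro ⟨⟨p, hp⟩, x, y⟩ ⟨⟨q, hq⟩, u, v⟩ hfe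
      have hfe' : x.1 ++ y.1 = u.1 ++ v.1 := congrArg Subtype.val hfe
      have h1 : x.1 = u.1 := huniq _ _ _ _ x.2.1 y.2.1 u.2.1 v.2.1 hfe'
      have h2 : y.1 = v.1 := List.append_cancel_left (h1 ▸ hfe')
      have hpq : p = q := by
        have e1 := x.2.2; have e2 := y.2.2; have e3 := u.2.2; have e4 := v.2.2
        rw [h1] at e1; rw [h2] at e2
        exact Prod.ext (e1 ▸ e3) (e2 ▸ e4)
      subst hpq
      exact Sigma.ext rfl (heq_of_eq (Prod.ext (Subtype.ext h1) (Subtype.ext h2)))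
    · rintro ⟨l, hC, hw⟩
      obtain ⟨l1, l2, hA1, hB2, rfl⟩ := (h l).1 hC
      rw [wt_append] at hw
      exact ⟨⟨⟨(wt l1, wt l2), Finset.HasAntidiagonal.mem_antidiagonal.2 hw⟩,
        ⟨l1, hA1, rfl⟩, ⟨l2, hB2, rfl⟩⟩, rfl⟩
  rw [key, nat_card_sigma]
  rw [← Finset.sum_coe_sort (antidiagonal n)
    (fun p => (coeff p.1) (gf A) * (coeff p.2) (gf B))]
  push_cast
  apply Finset.sum_congr rfl
  intro p _
  rw [hT]
  rw [Nat.card_prod]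
  simp [gf, coeff_mk]

end GFLemmas

section WalkLemmas

lemma height_append (l1 l2 : List ℤ) (m : ℕ) :
    ((l1 ++ l2).take m).sum = (l1.take m).sum + (l2.take (m - l1.length)).sum := by
  rcases le_or_gt m l1.length with h | h
  · rw [List.take_append_of_le_length h, Nat.sub_eq_zero_of_le h]
    simp
  · have hm : m = l1.length + (m - l1.length) := by omega
    have h2 : l1.take m = l1 := List.take_of_length_le (le_of_lt h)
    calc ((l1 ++ l2).take m).sum
        = ((l1 ++ l2).take (l1.length + (m - l1.length))).sum := by rw [← hm]
      _ = l1.sum + (l2.take (m - l1.length)).sum := by rw [List.take_append, List.sum_append, ← hm, h2]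
      _ = (l1.take m).sum + (l2.take (m - l1.length)).sum := by rw [h2]

lemma Wk_nil (a b : ℤ) : Wk a b [] ↔ 0 ≤ a ∧ a = b := by
  constructor
  · rintro ⟨-, h2, h3⟩
    exact ⟨by simpa using h2 0, by simpa using h3⟩
  · rintro ⟨h1, rfl⟩
    exact ⟨by simp, fun m => by simpa using h1, by simp⟩

lemma Wk_add_one {a b : ℤ} {l : List ℤ} (h : Wk a b l) : Wk (a + 1) (b + 1) l := by
  obtain ⟨h1, h2, h3⟩ := h
  exact ⟨h1, fun m => by have := h2 m; omega, by omega⟩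

lemma Wk_cons {a b x : ℤ} {l : List ℤ} :
    Wk a b (x :: l) ↔ x ∈ SS ∧ 0 ≤ a ∧ Wk (a + x) b l := by
  constructor
  · rintro ⟨h1, h2, h3⟩
    refine ⟨h1 x (by simp), by simpa using h2 0, fun y hy => h1 y (by simp [hy]),
      fun m => ?_, ?_⟩
    · have := h2 (m + 1)
      rw [List.take_succ_cons] at this
      simp only [List.sum_cons] at this
      omega
    · simp only [List.sum_cons] at h3; omega
  · rintro ⟨hx, ha, h1, h2, h3⟩
    refine ⟨?_, fun m => ?_, ?_⟩
    · intro y hy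
      rcases List.mem_cons.1 hy with rfl | hy
      · exact hx
      · exact h1 y hy
    · match m with
      | 0 => simpa using ha
      | m + 1 =>
        rw [List.take_succ_cons]
        simp only [List.sum_cons]
        have := h2 m
        omega
    · simp only [List.sum_cons]; omega

lemma Wk_concat {a b s : ℤ} {l : List ℤ} :
    Wk a b (l ++ [s]) ↔ s ∈ SS ∧ 0 ≤ b ∧ Wk a (b - s) l := by
  constructor
  · rintro ⟨h1, h2, h3⟩
    have hsum : a + (l.sum + s) = b := by
      rw [List.sum_append] at h3; simpa using h3
    have hend : 0 ≤ a + l.sum := by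
      have := h2 l.length
      rwa [List.take_append_of_le_length le_rfl, List.take_length] at this
    have hb : 0 ≤ b := by
      have := h2 (l.length + 1)
      rw [List.take_of_length_le (by simp)] at this
      rw [List.sum_append] at this
      simp only [List.sum_cons, List.sum_nil, add_zero] at this
      omega
    refine ⟨h1 s (by simp), hb, fun y hy => h1 y (by simp [hy]), fun m => ?_, by omega⟩
    rcases le_or_gt m l.length with h | h
    · have := h2 m
      rwa [List.take_append_of_le_length h] at this
    · rw [List.take_of_length_le (le_of_lt h)]
      omega
  · rintro ⟨hs, hb, h1, h2, h3⟩
    refine ⟨?_, fun m => ?_, ?_⟩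
    · intro y hy
      rcases List.mem_append.1 hy with hy | hy
      · exact h1 y hy
      · simp at hy; subst hy; exact hs
    · rw [height_append]
      rcases le_or_gt m l.length with h | h
      · rw [Nat.sub_eq_zero_of_le h]
        simpa using h2 m
      · rw [List.take_of_length_le (le_of_lt h), List.take_of_length_le
          (by simp; omega : ([s] : List ℤ).length ≤ m - l.length)]
        simp only [List.sum_cons, List.sum_nil]
        omega
    · rw [List.sum_append]
      simp only [List.sum_cons, List.sum_nil]
      omega

lemma Wk_append {a b c : ℤ} {l1 l2 : List ℤ} (h1 : Wk a c l1) (h2 : Wk c b l2) :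
    Wk a b (l1 ++ l2) := by
  obtain ⟨s1, n1, e1⟩ := h1
  obtain ⟨s2, n2, e2⟩ := h2
  refine ⟨?_, fun m => ?_, ?_⟩
  · intro y hy
    rcases List.mem_append.1 hy with hy | hy
    · exact s1 y hy
    · exact s2 y hy
  · rw [height_append]
    rcases le_or_gt m l1.length with h | h
    · rw [Nat.sub_eq_zero_of_le h]
      simpa using n1 m
    · rw [List.take_of_length_le (le_of_lt h)]
      have := n2 (m - l1.length)
      omega
  · rw [List.sum_append]; omega

end WalkLemmas

section FPLemmas

lemma FP_steps {a : ℤ} {l : List ℤ} (h : FP a l) : ∀ x ∈ l, x ∈ SS := h.1.1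

lemma FP_iff {a : ℤ} (ha : 0 < a) (l : List ℤ) :
    FP a l ↔ (∃ l', Wk (a - 1) 0 l' ∧ l = l' ++ [-1]) ∨
      (∃ l', Wk (a - 1) 1 l' ∧ l = l' ++ [-2]) := by
  constructor
  · rintro ⟨⟨h1, h2, h3⟩, hpos⟩
    rcases List.eq_nil_or_concat l with rfl | ⟨l', s, rfl⟩
    · simp at h3; omega
    rw [List.concat_eq_append] at *
    have hsum : a + (l'.sum + s) = 0 := by
      rw [List.sum_append] at h3; simpa using h3
    have hlen : (l' ++ [s]).length = l'.length + 1 := by simp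
    have hpre : 0 < a + l'.sum := by
      have := hpos l'.length (by omega)
      rwa [List.take_append_of_le_length le_rfl, List.take_length] at this
    have hs : s = -1 ∨ s = -2 := by
      have hsS : s = 1 ∨ s = -1 ∨ s = 2 ∨ s = -2 := by
        have := h1 s (by simp)
        simpa [SS, Set.mem_insert_iff] using this
      omega
    have hWk : ∀ c : ℤ, (a - 1) + l'.sum = c → Wk (a - 1) c l' := by
      intro c hc
      refine ⟨fun y hy => h1 y (by simp [hy]), fun m => ?_, hc⟩
      rcases le_or_gt m l'.length with h | h
      · have hp := hpos m (by rw [hlen]; omega)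
        rw [List.take_append_of_le_length h] at hp
        omega
      · rw [List.take_of_length_le (le_of_lt h)]
        omega
    rcases hs with rfl | rfl
    · exact Or.inl ⟨l', hWk 0 (by omega), rfl⟩
    · exact Or.inr ⟨l', hWk 1 (by omega), rfl⟩
  · rintro (⟨l', ⟨h1, h2, h3⟩, rfl⟩ | ⟨l', ⟨h1, h2, h3⟩, rfl⟩)
    · refine ⟨Wk_concat.2 ⟨by simp [SS], le_refl 0, ?_⟩, fun m hm => ?_⟩
      · refine ⟨h1, fun m => by have := h2 m; omega, by omega⟩
      · rw [List.length_append] at hm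
        simp only [List.length_cons, List.length_nil] at hm
        have hm' : m ≤ l'.length := by omega
        rw [List.take_append_of_le_length hm']
        have := h2 m
        omega
    · refine ⟨Wk_concat.2 ⟨by simp [SS], le_refl 0, ?_⟩, fun m hm => ?_⟩
      · refine ⟨h1, fun m => by have := h2 m; omega, by omega⟩
      · rw [List.length_append] at hm
        simp only [List.length_cons, List.length_nil] at hm
        have hm' : m ≤ l'.length := by omega
        rw [List.take_append_of_le_length hm']
        have := h2 m
        omega

lemma FP_split {a b : ℤ} {l : List ℤ} (ha : 0 < a) (hl : Wk a b l)
    (hhit : ∃ m, a + (l.take m).sum = 0) :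
    ∃ l1 l2, FP a l1 ∧ Wk 0 b l2 ∧ l = l1 ++ l2 := by
  classical
  obtain ⟨h1, h2, h3⟩ := hl
  set P : ℕ → Prop := fun m => a + (l.take m).sum = 0 with hP
  have hhit' : ∃ m, P m := hhit
  set m := Nat.find hhit' with hm
  have hPm : P m := Nat.find_spec hhit'
  have hmin : ∀ j, j < m → ¬ P j := fun j hj => Nat.find_min hhit' hj
  have hmle : m ≤ l.length := by
    by_contra hc
    push_neg at hc
    have hPl : P l.length := by
      have ht : l.take m = l := List.take_of_length_le (le_of_lt hc)
      have hPm' : a + (l.take m).sum = 0 := hPm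
      rw [ht] at hPm'
      show a + (l.take l.length).sum = 0
      rw [List.take_length]
      exact hPm'
    exact hmin l.length hc hPl
  refine ⟨l.take m, l.drop m, ⟨⟨?_, ?_, ?_⟩, ?_⟩, ⟨?_, ?_, ?_⟩, (List.take_append_drop m l).symm⟩
  · exact fun y hy => h1 y (List.take_subset m l hy)
  · intro j
    rw [List.take_take]
    exact h2 (min j m)
  · exact hPm
  · intro j hj
    rw [List.length_take] at hj
    have hjm : j < m := by omega
    rw [List.take_take, min_eq_left (le_of_lt hjm)]
    have := h2 j
    have := hmin j hjm
    simp only [hP] at this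
    omega
  · exact fun y hy => h1 y (List.drop_subset m l hy)
  · intro j
    have key : ((l.drop m).take j).sum = (l.take (m + j)).sum - (l.take m).sum := by
      rw [List.take_add, List.sum_append]
      omega
    have := h2 (m + j)
    simp only [hP] at hPm
    omega
  · have : l.sum = (l.take m).sum + (l.drop m).sum := by
      conv_lhs => rw [← List.take_append_drop m l]
      rw [List.sum_append]
    simp only [hP] at hPm
    omega

lemma FP_sum {a : ℤ} {l : List ℤ} (h : FP a l) : a + l.sum = 0 := h.1.2.2

lemma not_lt_split {a : ℤ} {p q p' q' : List ℤ} (hp : a + p.sum = 0)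
    (hpos : ∀ m < p'.length, 0 < a + (p'.take m).sum)
    (he : p ++ q = p' ++ q') : ¬ p.length < p'.length := by
  intro hlt
  have h1 : (p' ++ q').take p.length = p := by
    rw [← he, List.take_append_of_le_length le_rfl, List.take_length]
  rw [List.take_append_of_le_length (le_of_lt hlt)] at h1
  have := hpos p.length hlt
  rw [h1] at this
  omega

lemma FP_uniq {a b b' : ℤ} {l1 l2 l1' l2' : List ℤ} (h1 : FP a l1) (h2 : Wk 0 b l2)
    (h1' : FP a l1') (h2' : Wk 0 b' l2') (he : l1 ++ l2 = l1' ++ l2') : l1 = l1' := by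
  have hn1 : ¬ l1.length < l1'.length := not_lt_split (FP_sum h1) h1'.2 he
  have hn2 : ¬ l1'.length < l1.length := not_lt_split (FP_sum h1') h1.2 he.symm
  have hlen : l1.length = l1'.length := by omega
  have : (l1 ++ l2).take l1.length = (l1' ++ l2').take l1'.length := by rw [he, hlen]
  rwa [List.take_left, List.take_left] at this

end FPLemmas

section Decompositions

def DE : List ℤ → Prop := fun l => ∃ l1 l2, FP 1 l1 ∧ Wk 0 0 l2 ∧ l = l1 ++ l2
def GE : List ℤ → Prop := fun l => ∃ l1 l2, FP 2 l1 ∧ Wk 0 0 l2 ∧ l = l1 ++ l2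
def DF : List ℤ → Prop := fun l => ∃ l1 l2, FP 1 l1 ∧ Wk 0 1 l2 ∧ l = l1 ++ l2
def QQ : List ℤ → Prop := fun l =>
  (∃ l', Wk 0 0 l' ∧ l = 1 :: l') ∨ (∃ l', Wk 1 0 l' ∧ l = 2 :: l')
def EQ : List ℤ → Prop := fun l => ∃ l1 l2, Wk 0 0 l1 ∧ QQ l2 ∧ l = l1 ++ l2

lemma one_mem_SS : (1 : ℤ) ∈ SS := by simp [SS]
lemma two_mem_SS : (2 : ℤ) ∈ SS := by simp [SS]

lemma W10_decomp (l : List ℤ) : Wk 1 0 l ↔ DE l := by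
  constructor
  · intro h
    obtain ⟨l1, l2, h1, h2, rfl⟩ := FP_split one_pos h
      ⟨l.length, by rw [List.take_length]; exact h.2.2⟩
    exact ⟨l1, l2, h1, h2, rfl⟩
  · rintro ⟨l1, l2, hfp, hw, rfl⟩
    exact Wk_append hfp.1 hw

lemma exc_decomp (l : List ℤ) : Wk 0 0 l ↔ l = [] ∨
    ((∃ l', DE l' ∧ l = 1 :: l') ∨ (∃ l', GE l' ∧ l = 2 :: l')) := by
  constructor
  · intro h
    cases l with
    | nil => exact Or.inl rfl
    | cons x xs =>
      right
      obtain ⟨hx, -, hWk⟩ := Wk_cons.1 h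
      have hx0 : 0 ≤ 0 + x := by simpa using hWk.2.1 0
      have hxS : x = 1 ∨ x = -1 ∨ x = 2 ∨ x = -2 := by
        simpa [SS, Set.mem_insert_iff] using hx
      have hx12 : x = 1 ∨ x = 2 := by omega
      rcases hx12 with rfl | rfl
      · left
        simp only [zero_add] at hWk
        obtain ⟨l1, l2, h1, h2, rfl⟩ := FP_split one_pos hWk
          ⟨xs.length, by rw [List.take_length]; exact hWk.2.2⟩
        exact ⟨l1 ++ l2, ⟨l1, l2, h1, h2, rfl⟩, rfl⟩
      · right
        simp only [zero_add] at hWk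
        obtain ⟨l1, l2, h1, h2, rfl⟩ := FP_split two_pos hWk
          ⟨xs.length, by rw [List.take_length]; exact hWk.2.2⟩
        exact ⟨l1 ++ l2, ⟨l1, l2, h1, h2, rfl⟩, rfl⟩
  · rintro (rfl | ⟨l', ⟨l1, l2, hfp, hw, rfl⟩, rfl⟩ | ⟨l', ⟨l1, l2, hfp, hw, rfl⟩, rfl⟩)
    · exact ⟨by simp, fun m => by simp, by simp⟩
    · exact Wk_cons.2 ⟨one_mem_SS, le_refl 0, by
        simpa using Wk_append hfp.1 hw⟩
    · exact Wk_cons.2 ⟨two_mem_SS, le_refl 0, by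
        simpa using Wk_append hfp.1 hw⟩

lemma H_decomp (l : List ℤ) : Wk 1 1 l ↔ Wk 0 0 l ∨ DF l := by
  constructor
  · intro h
    by_cases hhit : ∃ m, 1 + (l.take m).sum = 0
    · right
      obtain ⟨l1, l2, h1, h2, rfl⟩ := FP_split one_pos h hhit
      exact ⟨l1, l2, h1, h2, rfl⟩
    · left
      push_neg at hhit
      obtain ⟨h1, h2, h3⟩ := h
      exact ⟨h1, fun m => by have := h2 m; have := hhit m; omega, by omega⟩
  · rintro (⟨h1, h2, h3⟩ | ⟨l1, l2, hfp, hw, rfl⟩)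
    · exact ⟨h1, fun m => by have := h2 m; omega, by omega⟩
    · exact Wk_append hfp.1 hw

lemma H_disj {l : List ℤ} (h : Wk 0 0 l) (hd : DF l) : False := by
  obtain ⟨l1, l2, hfp, hw, rfl⟩ := hd
  have hsum : 1 + l1.sum = 0 := FP_sum hfp
  have h2 := h.2.1 l1.length
  rw [List.take_left] at h2
  omega

lemma F_decomp (l : List ℤ) : Wk 0 1 l ↔ EQ l := by
  constructor
  · rintro ⟨h1, h2, h3⟩
    classical
    set P : ℕ → Prop := fun m => (l.take m).sum = 0 with hP
    have hP0 : P 0 := by simp [hP]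
    set m := Nat.findGreatest P l.length with hm
    have hPm : P m := Nat.findGreatest_spec (Nat.zero_le _) hP0
    have hPm' : (l.take m).sum = 0 := hPm
    have hmle : m ≤ l.length := Nat.findGreatest_le l.length
    have hkey : ∀ k, m < k → 1 ≤ (l.take k).sum := by
      intro k hk
      rcases le_or_gt k l.length with hkl | hkl
      · have hnk : ¬ P k := Nat.findGreatest_is_greatest hk hkl
        have hnk' : ¬ (l.take k).sum = 0 := hnk
        have := h2 k
        omega
      · rw [List.take_of_length_le (le_of_lt hkl)]
        omega
    have hmlt : m < l.length := by
      rcases eq_or_lt_of_le hmle with heq | hlt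
      · exfalso
        rw [heq, List.take_length] at hPm'
        omega
      · exact hlt
    have hdrop : l.drop m = l[m] :: l.drop (m + 1) := List.drop_eq_getElem_cons hmlt
    set s := l[m] with hs
    have hts : (l.take (m + 1)).sum = (l.take m).sum + s := by
      rw [List.take_add, List.sum_append, hdrop]
      simp
    have hs1 : 1 ≤ s := by
      have := hkey (m + 1) (by omega)
      omega
    have hsS : s = 1 ∨ s = -1 ∨ s = 2 ∨ s = -2 := by
      simpa [SS, Set.mem_insert_iff] using h1 s (List.getElem_mem hmlt)
    have htail : ∀ j, ((l.drop (m + 1)).take j).sum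
        = (l.take (m + 1 + j)).sum - (l.take (m + 1)).sum := by
      intro j
      rw [List.take_add, List.sum_append]
      ring
    have htsum : l.sum = (l.take (m + 1)).sum + (l.drop (m + 1)).sum := by
      conv_lhs => rw [← List.take_append_drop (m + 1) l]
      rw [List.sum_append]
    have hltake : ∀ y ∈ l.drop (m + 1), y ∈ SS := fun y hy => h1 y (List.drop_subset _ l hy)
    refine ⟨l.take m, l.drop m, ⟨?_, ?_, ?_⟩, ?_, (List.take_append_drop m l).symm⟩
    · exact fun y hy => h1 y (List.take_subset m l hy)
    · intro j
      rw [List.take_take]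
      have := h2 (min j m)
      omega
    · omega
    · rcases (by omega : s = 1 ∨ s = 2) with hs' | hs'
      · left
        refine ⟨l.drop (m + 1), ⟨hltake, fun j => ?_, ?_⟩, by rw [hdrop, hs']⟩
        · have := hkey (m + 1 + j) (by omega)
          have := htail j
          omega
        · omega
      · right
        refine ⟨l.drop (m + 1), ⟨hltake, fun j => ?_, ?_⟩, by rw [hdrop, hs']⟩
        · have := hkey (m + 1 + j) (by omega)
          have := htail j
          omega
        · omega
  · rintro ⟨l1, l2, hw1, hq, rfl⟩
    rcases hq with ⟨l', hw, rfl⟩ | ⟨l', hw, rfl⟩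
    · exact Wk_append hw1 (Wk_cons.2 ⟨one_mem_SS, le_refl 0, by simpa using Wk_add_one hw⟩)
    · exact Wk_append hw1 (Wk_cons.2 ⟨two_mem_SS, le_refl 0, by simpa using Wk_add_one hw⟩)

lemma QQ_key {p q : List ℤ} (hp : Wk 0 0 p) (hq : QQ q) :
    ((p ++ q).take p.length).sum = 0 ∧ ∀ k, p.length < k → 1 ≤ ((p ++ q).take k).sum := by
  have hps : p.sum = 0 := by have := hp.2.2; omega
  constructor
  · rw [List.take_left]; exact hps
  · intro k hk
    rw [height_append, List.take_of_length_le (by omega : p.length ≤ k), hps]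
    have hk1 : k - p.length = (k - p.length - 1) + 1 := by omega
    rcases hq with ⟨l', hw, rfl⟩ | ⟨l', hw, rfl⟩
    · rw [hk1, List.take_succ_cons, List.sum_cons]
      have := hw.2.1 (k - p.length - 1)
      omega
    · rw [hk1, List.take_succ_cons, List.sum_cons]
      have := hw.2.1 (k - p.length - 1)
      omega

lemma QQ_uniq {l1 l2 l1' l2' : List ℤ} (h1 : Wk 0 0 l1) (h2 : QQ l2)
    (h1' : Wk 0 0 l1') (h2' : QQ l2') (he : l1 ++ l2 = l1' ++ l2') : l1 = l1' := by
  obtain ⟨z1, k1⟩ := QQ_key h1 h2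
  obtain ⟨z2, k2⟩ := QQ_key h1' h2'
  have hn1 : ¬ l1.length < l1'.length := by
    intro hlt
    have hx := k1 l1'.length hlt
    rw [he] at hx
    omega
  have hn2 : ¬ l1'.length < l1.length := by
    intro hlt
    have hx := k2 l1.length hlt
    rw [← he] at hx
    omega
  have hlen : l1.length = l1'.length := by omega
  have : (l1 ++ l2).take l1.length = (l1' ++ l2').take l1'.length := by rw [he, hlen]
  rwa [List.take_left, List.take_left] at this

end Decompositions

section Equations

open PowerSeries

lemma steps_Wk (a b : ℤ) : ∀ l, Wk a b l → ∀ x ∈ l, x ∈ SS := fun _ h => h.1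
lemma steps_FP (a : ℤ) : ∀ l, FP a l → ∀ x ∈ l, x ∈ SS := fun _ h => h.1.1

lemma steps_split {A B : List ℤ → Prop} (hA : ∀ l, A l → ∀ x ∈ l, x ∈ SS)
    (hB : ∀ l, B l → ∀ x ∈ l, x ∈ SS) :
    ∀ l, (∃ l1 l2, A l1 ∧ B l2 ∧ l = l1 ++ l2) → ∀ x ∈ l, x ∈ SS := by
  rintro l ⟨l1, l2, h1, h2, rfl⟩ x hx
  rcases List.mem_append.1 hx with h | h
  exacts [hA _ h1 x h, hB _ h2 x h]

lemma steps_cons {s : ℤ} (hs : s ∈ SS) {A : List ℤ → Prop}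
    (hA : ∀ l, A l → ∀ x ∈ l, x ∈ SS) :
    ∀ l, (∃ l', A l' ∧ l = s :: l') → ∀ x ∈ l, x ∈ SS := by
  rintro l ⟨l', h', rfl⟩ x hx
  rcases List.mem_cons.1 hx with rfl | h
  exacts [hs, hA _ h' x h]

lemma steps_concat {s : ℤ} (hs : s ∈ SS) {A : List ℤ → Prop}
    (hA : ∀ l, A l → ∀ x ∈ l, x ∈ SS) :
    ∀ l, (∃ l', A l' ∧ l = l' ++ [s]) → ∀ x ∈ l, x ∈ SS := by
  rintro l ⟨l', h', rfl⟩ x hx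
  rcases List.mem_append.1 hx with h | h
  · exact hA _ h' x h
  · rw [List.mem_singleton] at h; subst h; exact hs

lemma steps_or {A B : List ℤ → Prop} (hA : ∀ l, A l → ∀ x ∈ l, x ∈ SS)
    (hB : ∀ l, B l → ∀ x ∈ l, x ∈ SS) :
    ∀ l, (A l ∨ B l) → ∀ x ∈ l, x ∈ SS := by
  rintro l (h | h) <;> [exact hA _ h; exact hB _ h]

lemma gf_split {A B : List ℤ → Prop}
    (hA : ∀ l, A l → ∀ x ∈ l, x ∈ SS) (hB : ∀ l, B l → ∀ x ∈ l, x ∈ SS)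
    (huniq : ∀ l1 l2 l1' l2', A l1 → B l2 → A l1' → B l2' →
      l1 ++ l2 = l1' ++ l2' → l1 = l1') :
    gf (fun l => ∃ l1 l2, A l1 ∧ B l2 ∧ l = l1 ++ l2) = gf A * gf B :=
  gf_mul hA hB (fun _ => Iff.rfl) huniq

lemma gf_before {s : ℤ} (hs : s ∈ SS) {A : List ℤ → Prop}
    (hA : ∀ l, A l → ∀ x ∈ l, x ∈ SS) :
    gf (fun l => ∃ l', A l' ∧ l = s :: l') = X ^ s.natAbs * gf A := by
  rw [← gf_single s]
  refine gf_mul (A := fun l => l = [s]) (B := A) ?_ hA ?_ ?_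
  · rintro l rfl x hx
    rw [List.mem_singleton] at hx; subst hx; exact hs
  · intro l
    constructor
    · rintro ⟨l', hA', rfl⟩; exact ⟨[s], l', rfl, hA', rfl⟩
    · rintro ⟨l1, l2, rfl, hA', rfl⟩; exact ⟨l2, hA', rfl⟩
  · rintro l1 l2 l1' l2' rfl _ rfl _ _; rfl

lemma gf_after {s : ℤ} (hs : s ∈ SS) {A : List ℤ → Prop}
    (hA : ∀ l, A l → ∀ x ∈ l, x ∈ SS) :
    gf (fun l => ∃ l', A l' ∧ l = l' ++ [s]) = gf A * X ^ s.natAbs := by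
  rw [← gf_single s]
  refine gf_mul (A := A) (B := fun l => l = [s]) hA ?_ ?_ ?_
  · rintro l rfl x hx
    rw [List.mem_singleton] at hx; subst hx; exact hs
  · intro l
    constructor
    · rintro ⟨l', hA', rfl⟩; exact ⟨l', [s], hA', rfl, rfl⟩
    · rintro ⟨l1, l2, hA', rfl, rfl⟩; exact ⟨l1, hA', rfl⟩
  · rintro l1 l2 l1' l2' h1 rfl h1' rfl he
    exact List.append_cancel_right he

lemma neg_one_mem_SS : (-1 : ℤ) ∈ SS := by simp [SS]
lemma neg_two_mem_SS : (-2 : ℤ) ∈ SS := by simp [SS]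

lemma steps_DE : ∀ l, DE l → ∀ x ∈ l, x ∈ SS := steps_split (steps_FP 1) (steps_Wk 0 0)
lemma steps_GE : ∀ l, GE l → ∀ x ∈ l, x ∈ SS := steps_split (steps_FP 2) (steps_Wk 0 0)
lemma steps_DF : ∀ l, DF l → ∀ x ∈ l, x ∈ SS := steps_split (steps_FP 1) (steps_Wk 0 1)
lemma steps_QQ : ∀ l, QQ l → ∀ x ∈ l, x ∈ SS :=
  steps_or (steps_cons one_mem_SS (steps_Wk 0 0)) (steps_cons two_mem_SS (steps_Wk 1 0))

lemma eqW : gf (Wk 1 0) = gf (FP 1) * gf (Wk 0 0) := by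
  rw [gf_congr W10_decomp]
  exact gf_split (steps_FP 1) (steps_Wk 0 0)
    (fun l1 l2 l1' l2' a b c d e => FP_uniq a b c d e)

lemma eqD : gf (FP 1) = gf (Wk 0 0) * X + gf (Wk 0 1) * X ^ 2 := by
  have hiff : ∀ l, FP 1 l ↔ (∃ l', Wk 0 0 l' ∧ l = l' ++ [-1]) ∨
      (∃ l', Wk 0 1 l' ∧ l = l' ++ [-2]) := by
    intro l
    have := FP_iff one_pos l
    norm_num at this
    exact this
  rw [gf_add (steps_concat neg_one_mem_SS (steps_Wk 0 0))
    (steps_concat neg_two_mem_SS (steps_Wk 0 1)) hiff ?_]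
  · rw [gf_after neg_one_mem_SS (steps_Wk 0 0), gf_after neg_two_mem_SS (steps_Wk 0 1)]
    norm_num
  · rintro l ⟨la, -, rfl⟩ ⟨lb, -, heq2⟩
    have := congrArg List.reverse heq2
    simp at this

lemma eqG : gf (FP 2) = gf (Wk 1 0) * X + gf (Wk 1 1) * X ^ 2 := by
  have hiff : ∀ l, FP 2 l ↔ (∃ l', Wk 1 0 l' ∧ l = l' ++ [-1]) ∨
      (∃ l', Wk 1 1 l' ∧ l = l' ++ [-2]) := by
    intro l
    have := FP_iff two_pos l
    norm_num at this
    exact this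
  rw [gf_add (steps_concat neg_one_mem_SS (steps_Wk 1 0))
    (steps_concat neg_two_mem_SS (steps_Wk 1 1)) hiff ?_]
  · rw [gf_after neg_one_mem_SS (steps_Wk 1 0), gf_after neg_two_mem_SS (steps_Wk 1 1)]
    norm_num
  · rintro l ⟨la, -, rfl⟩ ⟨lb, -, heq2⟩
    have := congrArg List.reverse heq2
    simp at this

lemma eqH : gf (Wk 1 1) = gf (Wk 0 0) + gf (FP 1) * gf (Wk 0 1) := by
  rw [gf_add (steps_Wk 0 0) steps_DF H_decomp (fun l ha hb => H_disj ha hb)]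
  congr 1
  exact gf_split (steps_FP 1) (steps_Wk 0 1)
    (fun l1 l2 l1' l2' a b c d e => FP_uniq a b c d e)

lemma eqE : gf (Wk 0 0) = 1 + X * (gf (FP 1) * gf (Wk 0 0))
    + X ^ 2 * (gf (FP 2) * gf (Wk 0 0)) := by
  have h1 : gf (Wk 0 0) = gf (fun l : List ℤ => l = []) +
      gf (fun l => (∃ l', DE l' ∧ l = 1 :: l') ∨ (∃ l', GE l' ∧ l = 2 :: l')) := by
    refine gf_add ?_ (steps_or (steps_cons one_mem_SS steps_DE)
      (steps_cons two_mem_SS steps_GE)) exc_decomp ?_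
    · rintro l rfl x hx; simp at hx
    · rintro l rfl (⟨l', -, h⟩ | ⟨l', -, h⟩) <;> simp at h
  have h2 : gf (fun l => (∃ l', DE l' ∧ l = 1 :: l') ∨ (∃ l', GE l' ∧ l = 2 :: l'))
      = gf (fun l => ∃ l', DE l' ∧ l = 1 :: l') + gf (fun l => ∃ l', GE l' ∧ l = 2 :: l') := by
    refine gf_add (steps_cons one_mem_SS steps_DE) (steps_cons two_mem_SS steps_GE)
      (fun l => Iff.rfl) ?_
    rintro l ⟨la, -, rfl⟩ ⟨lb, -, heq2⟩
    simp at heq2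
  have h3 : gf DE = gf (FP 1) * gf (Wk 0 0) :=
    gf_split (steps_FP 1) (steps_Wk 0 0) (fun l1 l2 l1' l2' a b c d e => FP_uniq a b c d e)
  have h4 : gf GE = gf (FP 2) * gf (Wk 0 0) :=
    gf_split (steps_FP 2) (steps_Wk 0 0) (fun l1 l2 l1' l2' a b c d e => FP_uniq a b c d e)
  conv_lhs => rw [h1, h2, gf_before one_mem_SS steps_DE, gf_before two_mem_SS steps_GE,
    gf_one, h3, h4]
  simp only [Int.natAbs_one, Int.natAbs_natCast, pow_one]
  ring

lemma eqF : gf (Wk 0 1) = gf (Wk 0 0) * (X * gf (Wk 0 0) + X ^ 2 * gf (Wk 1 0)) := by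
  have h1 : gf (Wk 0 1) = gf (Wk 0 0) * gf QQ := by
    rw [gf_congr F_decomp]
    exact gf_split (steps_Wk 0 0) steps_QQ
      (fun l1 l2 l1' l2' a b c d e => QQ_uniq a b c d e)
  have h2 : gf QQ = X * gf (Wk 0 0) + X ^ 2 * gf (Wk 1 0) := by
    have h2' : gf QQ = gf (fun l => ∃ l', Wk 0 0 l' ∧ l = 1 :: l')
        + gf (fun l => ∃ l', Wk 1 0 l' ∧ l = 2 :: l') := by
      refine gf_add (C := QQ) (steps_cons one_mem_SS (steps_Wk 0 0))
        (steps_cons two_mem_SS (steps_Wk 1 0)) (fun l => Iff.rfl) ?_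
      rintro l ⟨la, -, rfl⟩ ⟨lb, -, heq2⟩
      simp at heq2
    rw [h2', gf_before one_mem_SS (steps_Wk 0 0), gf_before two_mem_SS (steps_Wk 1 0)]
    norm_num
  rw [h1, h2]

end Equations


section Final

open PowerSeries

lemma basketGF_eq_gf : basketGF = gf (Wk 0 0) := by
  apply PowerSeries.ext
  intro n
  simp only [basketGF, gf, coeff_mk]
  congr 1
  have e : {l : List ℤ // IsExcursion {1, -1, 2, -2} l ∧ (l.map Int.natAbs).sum = n}
      = {l : List ℤ // Wk 0 0 l ∧ wt l = n} := by
    apply congrArg Subtype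
    funext l
    apply propext
    constructor
    · rintro ⟨⟨h1, h2, h3⟩, h4⟩
      exact ⟨⟨h1, fun m => by simpa using h2 m, by simpa using h3⟩, h4⟩
    · rintro ⟨⟨h1, h2, h3⟩, h4⟩
      exact ⟨⟨h1, fun m => by simpa using h2 m, by simpa using h3⟩, h4⟩
  rw [e]

lemma main_eq :
    (X : PowerSeries ℚ) ^ 8 * gf (Wk 0 0) ^ 4
      - X ^ 4 * (1 + 2 * X ^ 2) * gf (Wk 0 0) ^ 3
      + X ^ 2 * (3 + 2 * X ^ 2) * gf (Wk 0 0) ^ 2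
      - (1 + 2 * X ^ 2) * gf (Wk 0 0) + 1 = 0 := by
  set E := gf (Wk 0 0)
  set F := gf (Wk 0 1)
  set W := gf (Wk 1 0)
  set H := gf (Wk 1 1)
  set D := gf (FP 1)
  set G := gf (FP 2)
  have hE := eqE
  have hD := eqD
  have hG := eqG
  have hW := eqW
  have hH := eqH
  have hF := eqF
  have hne : (1 : PowerSeries ℚ) + X ^ 2 * E ≠ 0 := by
    intro h
    have := congrArg (constantCoeff) h
    simp [map_add, map_mul, map_pow, constantCoeff_X] at this
  have hDP : D * (1 - X ^ 2 * E) = X * E := by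
    apply mul_right_cancel₀ hne
    linear_combination hD + X ^ 2 * hF + X ^ 4 * E * hW
  have hFP : F * (1 - X ^ 2 * E) = X * E ^ 2 := by
    linear_combination (1 - X ^ 2 * E) * hF + X ^ 2 * E * (1 - X ^ 2 * E) * hW
      + X ^ 2 * E ^ 2 * hDP
  have hWP : W * (1 - X ^ 2 * E) = X * E ^ 2 := by
    linear_combination E * hDP + (1 - X ^ 2 * E) * hW
  have hHP : H * (1 - X ^ 2 * E) ^ 2 = E * (1 - X ^ 2 * E) ^ 2 + X ^ 2 * E ^ 3 := by
    linear_combination (1 - X ^ 2 * E) ^ 2 * hH + (F * (1 - X ^ 2 * E)) * hDP + (X * E) * hFP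
  have hGP : G * (1 - X ^ 2 * E) ^ 2 = X ^ 2 * E ^ 2 * (1 - X ^ 2 * E)
      + X ^ 2 * E * (1 - X ^ 2 * E) ^ 2 + X ^ 4 * E ^ 3 := by
    linear_combination (1 - X ^ 2 * E) ^ 2 * hG + X * (1 - X ^ 2 * E) * hWP + X ^ 2 * hHP
  linear_combination (-(1 - X ^ 2 * E) ^ 2) * hE - (X * E * (1 - X ^ 2 * E)) * hDP
    - (X ^ 2 * E) * hGP

end Final

end Basket

theorem basket_gf_eq :
    (PowerSeries.X : PowerSeries ℚ) ^ 8 * basketGF ^ 4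
      - PowerSeries.X ^ 4 * (1 + 2 * PowerSeries.X ^ 2) * basketGF ^ 3
      + PowerSeries.X ^ 2 * (3 + 2 * PowerSeries.X ^ 2) * basketGF ^ 2
      - (1 + 2 * PowerSeries.X ^ 2) * basketGF + 1 = 0 := by
  rw [Basket.basketGF_eq_gf]
  exact Basket.main_eq
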